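/- For the curve X⁵ + Y⁵ + aXZ⁴ + X³Z² = 0 with parameter a, the points (1:0:0) and (0:1:0) are nonsingular, and the plane curve is singular if a = 0 or a = 1/4 (over a field of characteristic 0). -/
import Mathlib


open MvPolynomial

/-- For `F_a = X⁵ + Y⁵ + aXZ⁴ + X³Z²` over an algebraically closed field of characteristic `0`,
the points `(1:0:0)` and `(0:1:0)` are nonsingular points, and if `a = 0` or `a = 1/4` the
plane curve `F_a = 0` is singular. -/
theorem quintic_family_singular_values {k : Type*} [Field k] [IsAlgClosed k] [CharZero k]
    (a : k) :
    ¬(eval ![1, 0, 0] ((X 0) ^ 5 + (X 1) ^ 5 + C a * X 0 * (X 2) ^ 4 + (X 0) ^ 3 * (X 2) ^ 2 :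
          MvPolynomial (Fin 3) k) = 0 ∧
      ∀ i : Fin 3, eval ![1, 0, 0]
        (pderiv i ((X 0) ^ 5 + (X 1) ^ 5 + C a * X 0 * (X 2) ^ 4 + (X 0) ^ 3 * (X 2) ^ 2 :
          MvPolynomial (Fin 3) k)) = 0) ∧
    ¬(eval ![0, 1, 0] ((X 0) ^ 5 + (X 1) ^ 5 + C a * X 0 * (X 2) ^ 4 + (X 0) ^ 3 * (X 2) ^ 2 :
          MvPolynomial (Fin 3) k) = 0 ∧
      ∀ i : Fin 3, eval ![0, 1, 0]
        (pderiv i ((X 0) ^ 5 + (X 1) ^ 5 + C a * X 0 * (X 2) ^ 4 + (X 0) ^ 3 * (X 2) ^ 2 :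
          MvPolynomial (Fin 3) k)) = 0) ∧
    ((a = 0 ∨ a = 1 / 4) → ∃ P : Fin 3 → k, P ≠ 0 ∧
      eval P ((X 0) ^ 5 + (X 1) ^ 5 + C a * X 0 * (X 2) ^ 4 + (X 0) ^ 3 * (X 2) ^ 2 :
          MvPolynomial (Fin 3) k) = 0 ∧
      ∀ i : Fin 3, eval P
        (pderiv i ((X 0) ^ 5 + (X 1) ^ 5 + C a * X 0 * (X 2) ^ 4 + (X 0) ^ 3 * (X 2) ^ 2 :
          MvPolynomial (Fin 3) k)) = 0) := by
  refine ⟨?_, ?_, ?_⟩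
  · rintro ⟨h, -⟩
    simp at h
  · rintro ⟨h, -⟩
    simp at h
  · rintro (rfl | rfl)
    · refine ⟨![0, 0, 1], ?_, ?_, ?_⟩
      · intro h
        have := congrFun h 2
        simp at this
      · simp
      · intro i
        fin_cases i <;> simp [pderiv_X]
    · obtain ⟨x, hx⟩ := IsAlgClosed.exists_pow_nat_eq (-(1/2) : k) (n := 2) (by norm_num)
      refine ⟨![x, 0, 1], ?_, ?_, ?_⟩
      · intro h
        have := congrFun h 2
        simp at this
      · have h4 : x ^ 4 = (1/4 : k) := by
          have : x ^ 4 = (x ^ 2) ^ 2 := by ring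
          rw [this, hx]; norm_num
        simp only [map_add, map_mul, map_pow, eval_X, eval_C]
        simp only [Matrix.cons_val_zero, Matrix.cons_val_one, Matrix.head_cons]
        have h2 : (![x, 0, 1] : Fin 3 → k) 2 = 1 := rfl
        rw [h2]
        have h5 : x ^ 5 = x * x ^ 4 := by ring
        have h3 : x ^ 3 = x * x ^ 2 := by ring
        rw [h5, h3, h4, hx]; ring
      · intro i
        fin_cases i <;> simp [pderiv_X] <;>
          first
          | linear_combination (5 * x ^ 2 + 1 / 2) * hx
          | linear_combination 2 * x * hx
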